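/- Let 1 ≤ p ≤ ∞, 1 ≤ q < ∞, let φ : [0,∞) → ℝ be a weight such that ∫₀^∞ r^{nq} e^{-qφ(r)} r dr < ∞ for every n ∈ ℕ₀ (so all monomials have finite norm), let μ be a positive Borel measure on (0,∞), and let C ≥ 0. Suppose that for every entire function f with ‖f‖_{p,q,φ} < ∞, the integral ∫_{(0,∞)} (1/t) |f(z/t)| dμ(t) is finite for every z ∈ ℂ and the function H_μ f(z) = ∫_{(0,∞)} (1/t) f(z/t) dμ(t) satisfies ‖H_μ f‖_{p,q,φ} ≤ C ‖f‖_{p,q,φ}. Then μ((0,1)) = 0 and ∫_{[1,∞)} (1/t) dμ(t) ≤ C. -/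

import Mathlib

open MeasureTheory Set Filter
open scoped ENNReal Topology

/-- The integral mean `M_p(f,r)` over the circle of radius `r`, with
`M_∞(f,r) = sup_{0≤θ≤2π} |f(r e^{iθ})|`. -/
noncomputable def Mp (p : ℝ≥0∞) (f : ℂ → ℂ) (r : ℝ) : ℝ :=
  if p = ⊤ then
    sSup ((fun θ : ℝ => ‖f ((r:ℂ) * Complex.exp ((θ:ℂ) * Complex.I))‖) ''
      Set.Icc 0 (2 * Real.pi))
  else
    ((1 / (2 * Real.pi)) *
        ∫ θ in (0:ℝ)..(2 * Real.pi),
          ‖f ((r:ℂ) * Complex.exp ((θ:ℂ) * Complex.I))‖ ^ p.toReal) ^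
      (1 / p.toReal)

/-- The weighted mixed norm `‖f‖_{p,q,φ}` (with values in `[0,∞]`), for `1 ≤ q < ∞`. -/
noncomputable def mixedNorm (p : ℝ≥0∞) (q : ℝ) (φ : ℝ → ℝ) (f : ℂ → ℂ) : ℝ≥0∞ :=
  (∫⁻ r in Set.Ioi (0:ℝ), ENNReal.ofReal (Mp p f r ^ q * Real.exp (-q * φ r) * r)) ^ (1 / q)

lemma Mp_monomial (p : ℝ≥0∞) (hp : 1 ≤ p) (c : ℝ) (hc : 0 ≤ c) (n : ℕ) (r : ℝ) (hr : 0 ≤ r) :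
    Mp p (fun z => (c:ℂ) * z ^ n) r = c * r ^ n := by
  have habs : (fun θ : ℝ => ‖(c:ℂ) *
      ((r:ℂ) * Complex.exp ((θ:ℂ) * Complex.I)) ^ n‖) = fun _ => c * r ^ n := by
    funext θ
    rw [norm_mul, norm_pow, norm_mul, Complex.norm_real, Complex.norm_real,
      Complex.norm_exp_ofReal_mul_I, Real.norm_eq_abs, Real.norm_eq_abs, abs_of_nonneg hc, abs_of_nonneg hr, mul_one]
  unfold Mp
  split_ifs with h
  · rw [show ((fun θ : ℝ => ‖(fun z => (c:ℂ) * z ^ n)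
      ((r:ℂ) * Complex.exp ((θ:ℂ) * Complex.I))‖) = fun _ : ℝ => c * r ^ n) from habs]
    rw [Set.Nonempty.image_const ⟨0, by constructor <;> positivity⟩, csSup_singleton]
  · have hpt : 0 < p.toReal := ENNReal.toReal_pos (by intro h0; rw [h0] at hp; simp at hp) h
    have : (fun θ : ℝ => ‖(fun z => (c:ℂ) * z ^ n)
        ((r:ℂ) * Complex.exp ((θ:ℂ) * Complex.I))‖ ^ p.toReal)
        = fun _ : ℝ => (c * r ^ n) ^ p.toReal := by
      funext θ; rw [congrFun habs θ]
    rw [show (∫ θ in (0:ℝ)..(2 * Real.pi),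
        ‖(fun z => (c:ℂ) * z ^ n) ((r:ℂ) * Complex.exp ((θ:ℂ) * Complex.I))‖ ^ p.toReal)
        = ∫ _ in (0:ℝ)..(2 * Real.pi), (c * r ^ n) ^ p.toReal from by rw [this]]
    rw [intervalIntegral.integral_const, smul_eq_mul, sub_zero]
    rw [show (1 / (2 * Real.pi)) * (2 * Real.pi * (c * r ^ n) ^ p.toReal)
        = (c * r ^ n) ^ p.toReal from by field_simp]
    rw [← Real.rpow_mul (by positivity), mul_one_div_cancel (ne_of_gt hpt), Real.rpow_one]

lemma mixedNorm_monomial (p : ℝ≥0∞) (hp : 1 ≤ p) (q : ℝ) (hq : 1 ≤ q) (φ : ℝ → ℝ)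
    (c : ℝ) (hc : 0 ≤ c) (n : ℕ) :
    mixedNorm p q φ (fun z => (c:ℂ) * z ^ n) = ENNReal.ofReal c *
      (∫⁻ r in Set.Ioi (0:ℝ),
        ENNReal.ofReal (r ^ ((n : ℝ) * q) * Real.exp (-q * φ r) * r)) ^ (1 / q) := by
  have hq0 : 0 < q := lt_of_lt_of_le one_pos hq
  unfold mixedNorm
  have hcongr : ∀ r ∈ Set.Ioi (0:ℝ),
      ENNReal.ofReal (Mp p (fun z => (c:ℂ) * z ^ n) r ^ q * Real.exp (-q * φ r) * r)
      = ENNReal.ofReal (c ^ q) *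
        ENNReal.ofReal (r ^ ((n : ℝ) * q) * Real.exp (-q * φ r) * r) := by
    intro r hr
    have hr0 : (0:ℝ) < r := hr
    rw [Mp_monomial p hp c hc n r hr0.le]
    rw [Real.mul_rpow hc (by positivity), ← Real.rpow_natCast r n,
      ← Real.rpow_mul hr0.le]
    rw [← ENNReal.ofReal_mul (by positivity)]
    ring_nf
  rw [setLIntegral_congr_fun measurableSet_Ioi hcongr]
  rw [lintegral_const_mul' _ _ ENNReal.ofReal_ne_top]
  rw [ENNReal.mul_rpow_of_nonneg _ _ (by positivity)]
  congr 1
  rw [← ENNReal.ofReal_rpow_of_nonneg hc hq0.le, ← ENNReal.rpow_mul,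
    mul_one_div_cancel (ne_of_gt hq0), ENNReal.rpow_one]

theorem stmt9 (p : ℝ≥0∞) (hp : 1 ≤ p) (q : ℝ) (hq : 1 ≤ q)
    (φ : ℝ → ℝ) (hφ : ContDiff ℝ 1 φ) (hφpos : ∀ r ≥ (0:ℝ), 0 < φ r)
    (hmono : ∀ n : ℕ,
      (∫⁻ r in Set.Ioi (0:ℝ),
        ENNReal.ofReal (r ^ ((n : ℝ) * q) * Real.exp (-q * φ r) * r)) < ⊤)
    (μ : Measure ℝ) (hμ0 : μ (Set.Iic 0) = 0) (C : ℝ) (hC : 0 ≤ C)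
    (hbdd : ∀ f : ℂ → ℂ, Differentiable ℂ f → mixedNorm p q φ f < ⊤ →
      (∀ z : ℂ,
        (∫⁻ t in Set.Ioi (0:ℝ),
          ENNReal.ofReal ((1 / t) * ‖f (z / (t:ℂ))‖) ∂μ) < ⊤) ∧
      mixedNorm p q φ (fun z => ∫ t in Set.Ioi (0:ℝ), (1 / (t:ℂ)) * f (z / (t:ℂ)) ∂μ) ≤
        ENNReal.ofReal C * mixedNorm p q φ f) :
    μ (Set.Ioo 0 1) = 0 ∧
      (∫⁻ t in Set.Ici (1:ℝ), ENNReal.ofReal (1 / t) ∂μ) ≤ ENNReal.ofReal C := by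
  have hq0 : 0 < q := lt_of_lt_of_le one_pos hq
  set A : ℕ → ℝ≥0∞ := fun n => ∫⁻ r in Set.Ioi (0:ℝ),
    ENNReal.ofReal (r ^ ((n : ℝ) * q) * Real.exp (-q * φ r) * r) with hA
  -- positivity of A n
  have hApos : ∀ n, 0 < A n := by
    intro n
    have hmeas : Measurable (fun r : ℝ =>
        ENNReal.ofReal (r ^ ((n : ℝ) * q) * Real.exp (-q * φ r) * r)) := by
      have := hφ.continuous; fun_prop
    rw [hA, lintegral_pos_iff_support hmeas]
    have hsub : Set.Ioi (0:ℝ) ⊆ Function.support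
        (fun r : ℝ => ENNReal.ofReal (r ^ ((n : ℝ) * q) * Real.exp (-q * φ r) * r)) := by
      intro r hr
      have hr0 : (0:ℝ) < r := hr
      exact (ENNReal.ofReal_pos.mpr
        (mul_pos (mul_pos (Real.rpow_pos_of_pos hr0 _) (Real.exp_pos _)) hr0)).ne'
    rw [Measure.restrict_apply' measurableSet_Ioi,
      Set.inter_eq_self_of_subset_right hsub]
    simp [Real.volume_Ioi]
  -- the key estimate
  have key : ∀ n : ℕ,
      (∫⁻ t in Set.Ioi (0:ℝ), ENNReal.ofReal ((1 / t) ^ (n + 1)) ∂μ) ≤ ENNReal.ofReal C := by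
    intro n
    set f : ℂ → ℂ := fun z => ((1:ℝ):ℂ) * z ^ n with hf
    have hfd : Differentiable ℂ f := (differentiable_pow n).const_mul _
    have hfnorm : mixedNorm p q φ f = (A n) ^ (1 / q) := by
      rw [hf, mixedNorm_monomial p hp q hq φ 1 zero_le_one n]; simp [hA]
    have hlt : mixedNorm p q φ f < ⊤ := by
      rw [hfnorm]
      exact ENNReal.rpow_lt_top_of_nonneg (by positivity) (hmono n).ne
    obtain ⟨hfin, hbound⟩ := hbdd f hfd hlt
    set g : ℝ → ℝ := fun t => (1 / t) ^ (n + 1) with hg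
    have hgm : Measurable g := by fun_prop
    have hcongr1 : ∀ t ∈ Set.Ioi (0:ℝ),
        ENNReal.ofReal ((1 / t) * ‖f ((1:ℂ) / (t:ℂ))‖) = ENNReal.ofReal (g t) := by
      intro t ht
      have ht0 : (0:ℝ) < t := ht
      congr 1
      have hcast : (1:ℂ) / (t:ℂ) = ((1 / t : ℝ) : ℂ) := by push_cast; ring
      rw [hf, hcast]
      simp only []
      rw [norm_mul, norm_pow, Complex.norm_real, Complex.norm_real, Real.norm_eq_abs,
        Real.norm_eq_abs, abs_of_nonneg (zero_le_one' ℝ), abs_of_nonneg (by positivity : (0:ℝ) ≤ 1 / t), one_mul]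
      rw [hg]; ring
    have hLfin : (∫⁻ t in Set.Ioi (0:ℝ), ENNReal.ofReal (g t) ∂μ) < ⊤ := by
      rw [← setLIntegral_congr_fun measurableSet_Ioi hcongr1]
      exact hfin 1
    have hnn : 0 ≤ᵐ[μ.restrict (Set.Ioi 0)] g :=
      (ae_restrict_iff' measurableSet_Ioi).mpr (Filter.Eventually.of_forall fun t ht => by
        have : (0:ℝ) < t := ht; positivity)
    have hint : Integrable g (μ.restrict (Set.Ioi 0)) := by
      refine ⟨hgm.aestronglyMeasurable, ?_⟩
      rw [hasFiniteIntegral_iff_ofReal hnn]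
      exact hLfin
    set I : ℝ := ∫ t in Set.Ioi (0:ℝ), g t ∂μ with hI
    have hIL : ENNReal.ofReal I = ∫⁻ t in Set.Ioi (0:ℝ), ENNReal.ofReal (g t) ∂μ :=
      ofReal_integral_eq_lintegral_ofReal hint hnn
    have hInn : (0:ℝ) ≤ I := integral_nonneg_of_ae hnn
    -- identify the Hausdorff image
    have hH : (fun z => ∫ t in Set.Ioi (0:ℝ), (1 / (t:ℂ)) * f (z / (t:ℂ)) ∂μ)
        = fun z => ((I:ℝ):ℂ) * z ^ n := by
      funext z
      have h1 : ∀ t : ℝ, (1 / (t:ℂ)) * f (z / (t:ℂ)) = z ^ n * ((g t : ℝ) : ℂ) := by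
        intro t
        rw [hf, hg]
        push_cast
        ring
      simp_rw [h1]
      rw [integral_const_mul, mul_comm, hI]
      congr 1
      exact integral_ofReal
    have hHnorm : mixedNorm p q φ
        (fun z => ∫ t in Set.Ioi (0:ℝ), (1 / (t:ℂ)) * f (z / (t:ℂ)) ∂μ)
        = ENNReal.ofReal I * (A n) ^ (1 / q) := by
      rw [hH]
      exact mixedNorm_monomial p hp q hq φ I hInn n
    have hb2 : ENNReal.ofReal I * (A n) ^ (1 / q) ≤ ENNReal.ofReal C * (A n) ^ (1 / q) := by
      rw [← hHnorm, ← hfnorm]; exact hbound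
    have hN0 : (A n) ^ (1 / q) ≠ 0 := (ENNReal.rpow_pos (hApos n) (hmono n).ne).ne'
    have hNt : (A n) ^ (1 / q) ≠ ⊤ :=
      (ENNReal.rpow_lt_top_of_nonneg (by positivity) (hmono n).ne).ne
    have hIC : ENNReal.ofReal I ≤ ENNReal.ofReal C := by
      rwa [ENNReal.mul_le_mul_iff_left hN0 hNt] at hb2
    rw [← hIL]; exact hIC
  constructor
  · -- μ (Ioo 0 1) = 0
    have hIoc : ∀ a : ℝ, 0 < a → a < 1 → μ (Set.Ioc 0 a) = 0 := by
      intro a ha0 ha1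
      have hbnd : ∀ n : ℕ, μ (Set.Ioc 0 a) ≤ ENNReal.ofReal C * ENNReal.ofReal (a ^ (n + 1)) := by
        intro n
        have h1 : ENNReal.ofReal ((1 / a) ^ (n + 1)) * μ (Set.Ioc 0 a) ≤ ENNReal.ofReal C := by
          calc ENNReal.ofReal ((1 / a) ^ (n + 1)) * μ (Set.Ioc 0 a)
              = ∫⁻ _ in Set.Ioc 0 a, ENNReal.ofReal ((1 / a) ^ (n + 1)) ∂μ :=
                (setLIntegral_const _ _).symm
            _ ≤ ∫⁻ t in Set.Ioc 0 a, ENNReal.ofReal ((1 / t) ^ (n + 1)) ∂μ := by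
                refine setLIntegral_mono (by fun_prop) fun t ht => ?_
                refine ENNReal.ofReal_le_ofReal (pow_le_pow_left₀ (by positivity) ?_ _)
                exact one_div_le_one_div_of_le ht.1 ht.2
            _ ≤ ∫⁻ t in Set.Ioi (0:ℝ), ENNReal.ofReal ((1 / t) ^ (n + 1)) ∂μ :=
                lintegral_mono_set (fun t ht => ht.1)
            _ ≤ ENNReal.ofReal C := key n
        calc μ (Set.Ioc 0 a)
            = ENNReal.ofReal (a ^ (n + 1)) *
              (ENNReal.ofReal ((1 / a) ^ (n + 1)) * μ (Set.Ioc 0 a)) := by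
              rw [← mul_assoc, ← ENNReal.ofReal_mul (by positivity), ← mul_pow,
                mul_one_div_cancel (ne_of_gt ha0), one_pow, ENNReal.ofReal_one, one_mul]
          _ ≤ ENNReal.ofReal (a ^ (n + 1)) * ENNReal.ofReal C := mul_le_mul_right h1 _
          _ = ENNReal.ofReal C * ENNReal.ofReal (a ^ (n + 1)) := mul_comm _ _
      have htend : Tendsto (fun n : ℕ => ENNReal.ofReal C * ENNReal.ofReal (a ^ (n + 1)))
          atTop (𝓝 0) := by
        have h1 : Tendsto (fun n : ℕ => a ^ (n + 1)) atTop (𝓝 0) :=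
          (tendsto_pow_atTop_nhds_zero_of_lt_one ha0.le ha1).comp (tendsto_add_atTop_nat 1)
        have h2 : Tendsto (fun n : ℕ => ENNReal.ofReal (a ^ (n + 1))) atTop (𝓝 0) := by
          have := ENNReal.tendsto_ofReal h1
          simpa using this
        have h3 := ENNReal.Tendsto.const_mul (a := ENNReal.ofReal C) h2 (Or.inr ENNReal.ofReal_ne_top)
        simpa using h3
      exact le_antisymm (ge_of_tendsto' htend hbnd) zero_le
    have hsub : Set.Ioo (0:ℝ) 1 ⊆ ⋃ k : ℕ, Set.Ioc (0:ℝ) (1 - 1 / (k + 2)) := by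
      intro x hx
      obtain ⟨k, hk⟩ : ∃ k : ℕ, 1 / ((k:ℝ) + 1) < 1 - x :=
        exists_nat_one_div_lt (by linarith [hx.2])
      refine Set.mem_iUnion.mpr ⟨k, hx.1, ?_⟩
      have : 1 / ((k:ℝ) + 2) ≤ 1 / ((k:ℝ) + 1) :=
        one_div_le_one_div_of_le (by positivity) (by linarith)
      linarith
    refine measure_mono_null hsub (measure_iUnion_null fun k => hIoc _ ?_ ?_)
    · have : 1 / ((k:ℝ) + 2) ≤ 1 / 2 := by
        exact one_div_le_one_div_of_le (by norm_num) (by push_cast; linarith)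
      linarith
    · have : 0 < 1 / ((k:ℝ) + 2) := by positivity
      linarith
  · -- the integral bound
    have h0 := key 0
    simp only [pow_one, zero_add] at h0
    calc (∫⁻ t in Set.Ici (1:ℝ), ENNReal.ofReal (1 / t) ∂μ)
        ≤ ∫⁻ t in Set.Ioi (0:ℝ), ENNReal.ofReal (1 / t) ∂μ :=
          lintegral_mono_set (fun t ht => Set.mem_Ioi.mpr (lt_of_lt_of_le one_pos ht))
      _ ≤ ENNReal.ofReal C := h0
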